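/- Suppose α > 0 and β = -1, and let λᵢ = τᵢ - ξᵢ⁵ - αξᵢ³ + ξᵢ^{-1}ηᵢ² for i = 1,2,3, where ξᵢ are nonzero reals. If (τ₁,ξ₁,η₁) + (τ₂,ξ₂,η₂) + (τ₃,ξ₃,η₃) = 0, then λ₁ + λ₂ + λ₃ = -3αξ₁ξ₂ξ₃ - 5ξ₁ξ₂ξ₃(ξ₁² + ξ₁ξ₂ + ξ₂²) - (ξ₂η₁ - η₂ξ₁)²/(ξ₁ξ₂ξ₃). -/
import Mathlib


/-- Resonance identity for the fifth-order KP II equation (`α > 0`, `β = -1`):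
if the three frequency vectors sum to zero, then with
`λᵢ = τᵢ - ξᵢ⁵ - αξᵢ³ + ξᵢ⁻¹ηᵢ²`,
`λ₁ + λ₂ + λ₃ = -3αξ₁ξ₂ξ₃ - 5ξ₁ξ₂ξ₃(ξ₁² + ξ₁ξ₂ + ξ₂²) - (ξ₂η₁ - η₂ξ₁)²/(ξ₁ξ₂ξ₃)`. -/
theorem stmt_3 (α : ℝ) (hα : 0 < α) (τ₁ τ₂ τ₃ ξ₁ ξ₂ ξ₃ η₁ η₂ η₃ : ℝ)
    (hξ₁ : ξ₁ ≠ 0) (hξ₂ : ξ₂ ≠ 0) (hξ₃ : ξ₃ ≠ 0)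
    (hτ : τ₁ + τ₂ + τ₃ = 0) (hξ : ξ₁ + ξ₂ + ξ₃ = 0) (hη : η₁ + η₂ + η₃ = 0) :
    (τ₁ - ξ₁^5 - α * ξ₁^3 + η₁^2 / ξ₁)
      + (τ₂ - ξ₂^5 - α * ξ₂^3 + η₂^2 / ξ₂)
      + (τ₃ - ξ₃^5 - α * ξ₃^3 + η₃^2 / ξ₃)
    = -3 * α * ξ₁ * ξ₂ * ξ₃ - 5 * ξ₁ * ξ₂ * ξ₃ * (ξ₁^2 + ξ₁ * ξ₂ + ξ₂^2)
        - (ξ₂ * η₁ - η₂ * ξ₁)^2 / (ξ₁ * ξ₂ * ξ₃) := by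
  have h3 : ξ₃ = -ξ₁ - ξ₂ := by linarith
  have hη3 : η₃ = -η₁ - η₂ := by linarith
  have hτ3 : τ₃ = -τ₁ - τ₂ := by linarith
  subst h3 hη3 hτ3
  field_simp
  ring
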